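/- Let ρ ∈ (0,1), let π be a bounded probability density on [0,1], and let c > 0. Define f_α(x,y) = (c·π(x)/(1−ρ)) · ∫*_{u=x}^{y} [ρ·π(u) + 1−ρ] du. Then for all x, y ∈ [0,1]: [ρ·π(y) + 1−ρ]·f_α(x,y) = ρ·∫*_{u=x}^{y} [ρ·π(u) + 1−ρ]·( π(y)·f_α(x,u) + π(x)·f_α(y,u) ) du + c·π(x)·∫*_{u=x}^{y} [ρ·π(u) + 1−ρ] du. -/

import Mathlib

open MeasureTheory Set

/-- Circular integral: `∫*_{u=a}^{b} h(u) du` on the circle `[0,1)`.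
It equals `∫_a^b h` if `a ≤ b` and `∫_a^1 h + ∫_0^b h` if `a > b`. -/
noncomputable def cint (a b : ℝ) (h : ℝ → ℝ) : ℝ :=
  if a ≤ b then ∫ u in a..b, h u
  else (∫ u in a..(1 : ℝ), h u) + ∫ u in (0 : ℝ)..b, h u


lemma gint_lemma (g : ℝ → ℝ) (hg : Measurable g) {a b C s t : ℝ}
    (hC : ∀ u ∈ Set.Ioc a b, |g u| ≤ C)
    (hs : s ∈ Set.Icc a b) (ht : t ∈ Set.Icc a b) :
    IntervalIntegrable g volume s t := by
  rw [intervalIntegrable_iff]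
  have hconst : IntegrableOn (fun _ : ℝ => C) (Set.uIoc s t) volume :=
    (integrableOn_const_iff).mpr (Or.inr measure_Ioc_lt_top)
  refine hconst.mono' hg.aestronglyMeasurable.restrict ?_
  refine (ae_restrict_iff' measurableSet_uIoc).mpr (ae_of_all _ fun u hu => ?_)
  have hsub : Set.uIoc s t ⊆ Set.Ioc a b := by
    rw [Set.uIoc]
    exact Set.Ioc_subset_Ioc (le_inf hs.1 ht.1) (sup_le hs.2 ht.2)
  exact hC u (hsub hu)

lemma sq_half_lemma (g : ℝ → ℝ) {a b C : ℝ} (hg : Measurable g) (hab : a ≤ b)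
    (hC : ∀ u ∈ Set.Ioc a b, |g u| ≤ C) :
    ∫ u in a..b, g u * ∫ v in a..u, g v = (∫ v in a..b, g v) ^ 2 / 2 := by
  set μ := volume.restrict (Set.Ioc a b) with hμdef
  haveI hfin : IsFiniteMeasure μ := by
    constructor
    rw [hμdef, Measure.restrict_apply_univ]
    exact measure_Ioc_lt_top
  set F : ℝ → ℝ → ℝ := fun u v => if v ≤ u then g u * g v else 0 with hFdef
  have hgi : ∀ s t, s ∈ Set.Icc a b → t ∈ Set.Icc a b → IntervalIntegrable g volume s t :=
    fun s t hs ht => gint_lemma g hg hC hs ht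
  have hFmeas : Measurable (Function.uncurry F) := by
    apply Measurable.ite (measurableSet_le measurable_snd measurable_fst)
    · exact (hg.comp measurable_fst).mul (hg.comp measurable_snd)
    · exact measurable_const
  have hFint : Integrable (Function.uncurry F) (μ.prod μ) := by
    have hconst : Integrable (fun _ : ℝ × ℝ => C * C) (μ.prod μ) := integrable_const _
    refine hconst.mono' hFmeas.aestronglyMeasurable ?_
    have : μ.prod μ = (volume.prod volume).restrict ((Set.Ioc a b) ×ˢ (Set.Ioc a b)) := by
      rw [hμdef, Measure.prod_restrict]
    rw [this]
    refine (ae_restrict_iff' (measurableSet_Ioc.prod measurableSet_Ioc)).mpr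
      (ae_of_all _ fun p hp => ?_)
    have h1 := hC p.1 hp.1
    have h2 := hC p.2 hp.2
    have hC0 : 0 ≤ C := le_trans (abs_nonneg _) h1
    simp only [hFdef, Function.uncurry]
    split_ifs
    · rw [Real.norm_eq_abs, abs_mul]
      exact mul_le_mul h1 h2 (abs_nonneg _) hC0
    · simpa using mul_nonneg hC0 hC0
  have swap := integral_integral_swap hFint
  -- LHS computation
  have hL : (∫ u, (∫ v, F u v ∂μ) ∂μ) = ∫ u in a..b, g u * ∫ v in a..u, g v := by
    rw [intervalIntegral.integral_of_le hab]
    refine setIntegral_congr_fun measurableSet_Ioc fun u hu => ?_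
    have h1 : (fun v => F u v) = Set.indicator (Set.Iic u) (fun v => g u * g v) := by
      funext v
      simp [hFdef, Set.indicator_apply]
    rw [h1, hμdef, integral_indicator measurableSet_Iic,
      Measure.restrict_restrict measurableSet_Iic]
    have h2 : Set.Iic u ∩ Set.Ioc a b = Set.Ioc a u := by
      ext v
      simp only [Set.mem_inter_iff, Set.mem_Iic, Set.mem_Ioc]
      constructor
      · rintro ⟨h3, h4, h5⟩; exact ⟨h4, h3⟩
      · rintro ⟨h3, h4⟩; exact ⟨h4, h3, le_trans h4 hu.2⟩
    rw [h2, ← intervalIntegral.integral_of_le hu.1.le, intervalIntegral.integral_const_mul]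
  -- RHS computation
  have hR : (∫ v, (∫ u, F u v ∂μ) ∂μ)
      = (∫ v in a..b, g v) * (∫ v in a..b, g v)
        - ∫ u in a..b, g u * ∫ v in a..u, g v := by
    have hstep : ∀ v ∈ Set.Ioc a b,
        (∫ u, F u v ∂μ) = g v * ((∫ w in a..b, g w) - ∫ w in a..v, g w) := by
      intro v hv
      have h1 : (fun u => F u v) = Set.indicator (Set.Ici v) (fun u => g u * g v) := by
        funext u
        simp [hFdef, Set.indicator_apply]
      rw [h1, hμdef, integral_indicator measurableSet_Ici,
        Measure.restrict_restrict measurableSet_Ici]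
      have h2 : Set.Ici v ∩ Set.Ioc a b = Set.Icc v b := by
        ext u
        simp only [Set.mem_inter_iff, Set.mem_Ici, Set.mem_Ioc, Set.mem_Icc]
        constructor
        · rintro ⟨h3, h4, h5⟩; exact ⟨h3, h5⟩
        · rintro ⟨h3, h4⟩; exact ⟨h3, lt_of_lt_of_le hv.1 h3, h4⟩
      rw [h2, integral_Icc_eq_integral_Ioc, ← intervalIntegral.integral_of_le hv.2,
        intervalIntegral.integral_mul_const,
        ← intervalIntegral.integral_interval_sub_left (hgi a b ⟨le_refl a, hab⟩ ⟨hab, le_refl b⟩)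
          (hgi a v ⟨le_refl a, hab⟩ ⟨hv.1.le, hv.2⟩)]
      ring
    rw [show (∫ v, (∫ u, F u v ∂μ) ∂μ)
        = ∫ v in a..b, g v * ((∫ w in a..b, g w) - ∫ w in a..v, g w) by
      rw [intervalIntegral.integral_of_le hab]
      exact setIntegral_congr_fun measurableSet_Ioc hstep]
    have hGcont : ContinuousOn (fun v => ∫ w in a..v, g w) (Set.uIcc a b) := by
      apply intervalIntegral.continuousOn_primitive_interval
      rw [Set.uIcc_of_le hab, integrableOn_Icc_iff_integrableOn_Ioc, ← Set.uIoc_of_le hab]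
      exact (intervalIntegrable_iff.mp (hgi a b ⟨le_refl a, hab⟩ ⟨hab, le_refl b⟩))
    have hint1 : IntervalIntegrable (fun v => g v * ∫ w in a..v, g w) volume a b :=
      (hgi a b ⟨le_refl a, hab⟩ ⟨hab, le_refl b⟩).mul_continuousOn hGcont
    have hint2 : IntervalIntegrable (fun v => g v * ∫ w in a..b, g w) volume a b :=
      (hgi a b ⟨le_refl a, hab⟩ ⟨hab, le_refl b⟩).mul_const _
    have : ∀ v : ℝ, g v * ((∫ w in a..b, g w) - ∫ w in a..v, g w)
        = g v * (∫ w in a..b, g w) - g v * ∫ w in a..v, g w := fun v => by ring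
    simp only [this]
    rw [intervalIntegral.integral_sub hint2 hint1, intervalIntegral.integral_mul_const]
  rw [hL, hR] at swap
  have : ∫ u in a..b, g u * ∫ v in a..u, g v
      = (∫ v in a..b, g v) * (∫ v in a..b, g v) - ∫ u in a..b, g u * ∫ v in a..u, g v := swap
  nlinarith [this]

lemma piece_lemma (g : ℝ → ℝ) {a b C : ℝ} (P Q R : ℝ) (hg : Measurable g) (hab : a ≤ b)
    (hC : ∀ u ∈ Set.Ioc a b, |g u| ≤ C) :
    ∫ u in a..b, (P * (g u * (R + ∫ v in a..u, g v)) + Q * g u)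
      = P * (R * (∫ v in a..b, g v) + (∫ v in a..b, g v) ^ 2 / 2)
        + Q * (∫ v in a..b, g v) := by
  have hgi : IntervalIntegrable g volume a b :=
    gint_lemma g hg hC ⟨le_refl a, hab⟩ ⟨hab, le_refl b⟩
  have hGcont : ContinuousOn (fun u => ∫ v in a..u, g v) (Set.uIcc a b) := by
    apply intervalIntegral.continuousOn_primitive_interval
    rw [Set.uIcc_of_le hab, integrableOn_Icc_iff_integrableOn_Ioc, ← Set.uIoc_of_le hab]
    exact intervalIntegrable_iff.mp hgi
  have hmul : IntervalIntegrable (fun u => g u * ∫ v in a..u, g v) volume a b :=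
    hgi.mul_continuousOn hGcont
  have hre : (fun u => P * (g u * (R + ∫ v in a..u, g v)) + Q * g u)
      = fun u => P * (g u * ∫ v in a..u, g v) + (P * R + Q) * g u := by
    funext u; ring
  rw [hre, intervalIntegral.integral_add (hmul.const_mul P) (hgi.const_mul _),
    intervalIntegral.integral_const_mul, intervalIntegral.integral_const_mul,
    sq_half_lemma g hg hab hC]
  ring

lemma cint_of_le {a b : ℝ} (h : a ≤ b) (f : ℝ → ℝ) :
    cint a b f = ∫ u in a..b, f u := if_pos h

lemma cint_of_gt {a b : ℝ} (h : b < a) (f : ℝ → ℝ) :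
    cint a b f = (∫ u in a..(1 : ℝ), f u) + ∫ u in (0 : ℝ)..b, f u := if_neg (not_le.mpr h)

/-- The travel-time part `f_α(x,y) = (c·π(x)/(1−ρ))·∫*_{u=x}^{y} [ρπ(u)+1−ρ] du`
solves the circular integral equation with inhomogeneous term
`c·π(x)·∫*_{u=x}^{y} [ρπ(u)+1−ρ] du`. -/
theorem travel_time_part_solves_integral_equation
    (ρ : ℝ) (hρ : ρ ∈ Set.Ioo (0 : ℝ) 1)
    (π : ℝ → ℝ) (hπmeas : Measurable π)
    (hπnn : ∀ x ∈ Set.Icc (0 : ℝ) 1, 0 ≤ π x)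
    (hπbd : ∃ M : ℝ, ∀ x ∈ Set.Icc (0 : ℝ) 1, π x ≤ M)
    (hπint : (∫ u in (0 : ℝ)..1, π u) = 1)
    (c : ℝ) (hc : 0 < c)
    (fα : ℝ → ℝ → ℝ)
    (hfα : ∀ x y : ℝ,
      fα x y = c * π x / (1 - ρ) * cint x y (fun u => ρ * π u + (1 - ρ))) :
    ∀ x ∈ Set.Icc (0 : ℝ) 1, ∀ y ∈ Set.Icc (0 : ℝ) 1,
      (ρ * π y + (1 - ρ)) * fα x y
        = ρ * cint x y (fun u => (ρ * π u + (1 - ρ)) * (π y * fα x u + π x * fα y u))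
          + c * π x * cint x y (fun u => ρ * π u + (1 - ρ)) := by
  intro x hx y hy
  obtain ⟨M, hM⟩ := hπbd
  have h1ρ : (0 : ℝ) < 1 - ρ := by linarith [hρ.2]
  have hρ0 : (0 : ℝ) < ρ := hρ.1
  have hgmeas : Measurable (fun u => ρ * π u + (1 - ρ)) :=
    (hπmeas.const_mul ρ).add_const _
  have hC : ∀ u ∈ Set.Ioc (0 : ℝ) 1, |ρ * π u + (1 - ρ)| ≤ ρ * M + (1 - ρ) := by
    intro u hu
    have hu' : u ∈ Set.Icc (0 : ℝ) 1 := Set.Ioc_subset_Icc_self hu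
    have h1 := hπnn u hu'
    have h2 := hM u hu'
    rw [abs_of_nonneg (by nlinarith)]
    nlinarith
  have hgi : ∀ s t : ℝ, s ∈ Set.Icc (0 : ℝ) 1 → t ∈ Set.Icc (0 : ℝ) 1 →
      IntervalIntegrable (fun u => ρ * π u + (1 - ρ)) volume s t :=
    fun s t hs ht => gint_lemma _ hgmeas hC hs ht
  have hπi : IntervalIntegrable π volume 0 1 := by
    refine gint_lemma π hπmeas (C := M) (fun u hu => ?_)
      ⟨le_refl 0, zero_le_one⟩ ⟨zero_le_one, le_refl 1⟩
    have hu' : u ∈ Set.Icc (0 : ℝ) 1 := Set.Ioc_subset_Icc_self hu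
    rw [abs_of_nonneg (hπnn u hu')]
    exact hM u hu'
  have hT : (∫ u in (0 : ℝ)..1, (ρ * π u + (1 - ρ))) = 1 := by
    rw [intervalIntegral.integral_add (hπi.const_mul ρ) intervalIntegrable_const,
      intervalIntegral.integral_const_mul, hπint, intervalIntegral.integral_const]
    simp
  have hadj : ∀ p q r : ℝ, p ∈ Set.Icc (0 : ℝ) 1 → q ∈ Set.Icc (0 : ℝ) 1 →
      r ∈ Set.Icc (0 : ℝ) 1 →
      (∫ u in p..q, (ρ * π u + (1 - ρ))) + (∫ u in q..r, (ρ * π u + (1 - ρ)))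
        = ∫ u in p..r, (ρ * π u + (1 - ρ)) :=
    fun p q r hp hq hr =>
      intervalIntegral.integral_add_adjacent_intervals (hgi p q hp hq) (hgi q r hq hr)
  have h01 : (0 : ℝ) ∈ Set.Icc (0 : ℝ) 1 := ⟨le_refl 0, zero_le_one⟩
  have h11 : (1 : ℝ) ∈ Set.Icc (0 : ℝ) 1 := ⟨zero_le_one, le_refl 1⟩
  rcases le_or_gt x y with hxy | hxy
  · rcases eq_or_lt_of_le hxy with rfl | hlt
    · rw [hfα x x]
      simp [cint_of_le le_rfl, intervalIntegral.integral_same]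
    · -- x < y
      have hC' : ∀ u ∈ Set.Ioc x y, |ρ * π u + (1 - ρ)| ≤ ρ * M + (1 - ρ) :=
        fun u hu => hC u ⟨lt_of_le_of_lt hx.1 hu.1, le_trans hu.2 hy.2⟩
      have hae : ∀ᵐ u : ℝ ∂(volume : Measure ℝ), u ≠ y := by
        rw [ae_iff]; simpa using measure_singleton y
      have hkey : (∫ u in x..y, (ρ * π u + (1 - ρ)) * (π y * fα x u + π x * fα y u))
          = (π y * (c * π x / (1 - ρ)) + π x * (c * π y / (1 - ρ)))
              * ((0:ℝ) * (∫ v in x..y, (ρ * π v + (1 - ρ)))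
                 + (∫ v in x..y, (ρ * π v + (1 - ρ))) ^ 2 / 2)
            + (π x * (c * π y / (1 - ρ))
                * (1 - (∫ v in x..y, (ρ * π v + (1 - ρ)))))
              * (∫ v in x..y, (ρ * π v + (1 - ρ))) := by
        have hstep : (∫ u in x..y, (ρ * π u + (1 - ρ)) * (π y * fα x u + π x * fα y u))
            = ∫ u in x..y,
              ((π y * (c * π x / (1 - ρ)) + π x * (c * π y / (1 - ρ)))
                * ((ρ * π u + (1 - ρ)) * ((0:ℝ) + ∫ v in x..u, (ρ * π v + (1 - ρ))))
              + (π x * (c * π y / (1 - ρ))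
                  * (1 - (∫ v in x..y, (ρ * π v + (1 - ρ)))))
                * (ρ * π u + (1 - ρ))) := by
          apply intervalIntegral.integral_congr_ae
          filter_upwards [hae] with u hu hmem
          rw [Set.uIoc_of_le hxy] at hmem
          have huy : u < y := lt_of_le_of_ne hmem.2 hu
          have hu01 : u ∈ Set.Icc (0:ℝ) 1 :=
            ⟨le_trans hx.1 hmem.1.le, le_trans hmem.2 hy.2⟩
          rw [hfα x u, hfα y u, cint_of_le hmem.1.le, cint_of_gt huy]
          have e1 : (∫ v in (0:ℝ)..y, (ρ * π v + (1 - ρ)))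
              + (∫ v in y..(1:ℝ), (ρ * π v + (1 - ρ))) = 1 := by
            rw [hadj 0 y 1 h01 hy h11]; exact hT
          have e2 : (∫ v in (0:ℝ)..x, (ρ * π v + (1 - ρ)))
              + (∫ v in x..u, (ρ * π v + (1 - ρ)))
              = ∫ v in (0:ℝ)..u, (ρ * π v + (1 - ρ)) := hadj 0 x u h01 hx hu01
          have e3 : (∫ v in (0:ℝ)..x, (ρ * π v + (1 - ρ)))
              + (∫ v in x..y, (ρ * π v + (1 - ρ)))
              = ∫ v in (0:ℝ)..y, (ρ * π v + (1 - ρ)) := hadj 0 x y h01 hx hy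
          have e4 : (∫ v in y..(1:ℝ), (ρ * π v + (1 - ρ)))
              + (∫ v in (0:ℝ)..u, (ρ * π v + (1 - ρ)))
              = 1 - (∫ v in x..y, (ρ * π v + (1 - ρ)))
                + ∫ v in x..u, (ρ * π v + (1 - ρ)) := by linarith
          rw [e4]; ring
        rw [hstep]
        exact piece_lemma (fun u => ρ * π u + (1 - ρ)) _ _ 0 hgmeas hxy hC'
      rw [hfα x y,
        cint_of_le hxy (fun u => (ρ * π u + (1 - ρ)) * (π y * fα x u + π x * fα y u)),
        cint_of_le hxy (fun u => ρ * π u + (1 - ρ)), hkey]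
      field_simp
      ring
  · -- y < x
    have hC1 : ∀ u ∈ Set.Ioc x (1:ℝ), |ρ * π u + (1 - ρ)| ≤ ρ * M + (1 - ρ) :=
      fun u hu => hC u ⟨lt_of_le_of_lt hx.1 hu.1, hu.2⟩
    have hC2 : ∀ u ∈ Set.Ioc (0:ℝ) y, |ρ * π u + (1 - ρ)| ≤ ρ * M + (1 - ρ) :=
      fun u hu => hC u ⟨hu.1, le_trans hu.2 hy.2⟩
    have hae : ∀ᵐ u : ℝ ∂(volume : Measure ℝ), u ≠ y := by
      rw [ae_iff]; simpa using measure_singleton y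
    have hkey1 : (∫ u in x..(1:ℝ), (ρ * π u + (1 - ρ)) * (π y * fα x u + π x * fα y u))
        = (π y * (c * π x / (1 - ρ)) + π x * (c * π y / (1 - ρ)))
            * ((0:ℝ) * (∫ v in x..(1:ℝ), (ρ * π v + (1 - ρ)))
               + (∫ v in x..(1:ℝ), (ρ * π v + (1 - ρ))) ^ 2 / 2)
          + (π x * (c * π y / (1 - ρ))
              * (1 - ((∫ v in x..(1:ℝ), (ρ * π v + (1 - ρ)))
                      + (∫ v in (0:ℝ)..y, (ρ * π v + (1 - ρ))))))
            * (∫ v in x..(1:ℝ), (ρ * π v + (1 - ρ))) := by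
      have hstep : (∫ u in x..(1:ℝ), (ρ * π u + (1 - ρ)) * (π y * fα x u + π x * fα y u))
          = ∫ u in x..(1:ℝ),
            ((π y * (c * π x / (1 - ρ)) + π x * (c * π y / (1 - ρ)))
              * ((ρ * π u + (1 - ρ)) * ((0:ℝ) + ∫ v in x..u, (ρ * π v + (1 - ρ))))
            + (π x * (c * π y / (1 - ρ))
                * (1 - ((∫ v in x..(1:ℝ), (ρ * π v + (1 - ρ)))
                        + (∫ v in (0:ℝ)..y, (ρ * π v + (1 - ρ))))))
              * (ρ * π u + (1 - ρ))) := by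
        apply intervalIntegral.integral_congr_ae
        refine Filter.Eventually.of_forall fun u hmem => ?_
        rw [Set.uIoc_of_le hx.2] at hmem
        have hu01 : u ∈ Set.Icc (0:ℝ) 1 := ⟨le_trans hx.1 hmem.1.le, hmem.2⟩
        have hyu : y ≤ u := le_trans hxy.le hmem.1.le
        rw [hfα x u, hfα y u, cint_of_le hmem.1.le, cint_of_le hyu]
        have e1 : (∫ v in (0:ℝ)..y, (ρ * π v + (1 - ρ)))
            + (∫ v in y..x, (ρ * π v + (1 - ρ)))
            = ∫ v in (0:ℝ)..x, (ρ * π v + (1 - ρ)) := hadj 0 y x h01 hy hx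
        have e2 : (∫ v in (0:ℝ)..x, (ρ * π v + (1 - ρ)))
            + (∫ v in x..(1:ℝ), (ρ * π v + (1 - ρ))) = 1 := by
          rw [hadj 0 x 1 h01 hx h11]; exact hT
        have e3 : (∫ v in y..x, (ρ * π v + (1 - ρ)))
            + (∫ v in x..u, (ρ * π v + (1 - ρ)))
            = ∫ v in y..u, (ρ * π v + (1 - ρ)) := hadj y x u hy hx hu01
        have e4 : (∫ v in y..u, (ρ * π v + (1 - ρ)))
            = 1 - ((∫ v in x..(1:ℝ), (ρ * π v + (1 - ρ)))
                   + (∫ v in (0:ℝ)..y, (ρ * π v + (1 - ρ))))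
              + ∫ v in x..u, (ρ * π v + (1 - ρ)) := by linarith
        rw [e4]; ring
      rw [hstep]
      exact piece_lemma (fun u => ρ * π u + (1 - ρ)) _ _ 0 hgmeas hx.2 hC1
    have hkey2 : (∫ u in (0:ℝ)..y, (ρ * π u + (1 - ρ)) * (π y * fα x u + π x * fα y u))
        = (π y * (c * π x / (1 - ρ)) + π x * (c * π y / (1 - ρ)))
            * ((∫ v in x..(1:ℝ), (ρ * π v + (1 - ρ)))
                * (∫ v in (0:ℝ)..y, (ρ * π v + (1 - ρ)))
               + (∫ v in (0:ℝ)..y, (ρ * π v + (1 - ρ))) ^ 2 / 2)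
          + (π x * (c * π y / (1 - ρ))
              * (1 - ((∫ v in x..(1:ℝ), (ρ * π v + (1 - ρ)))
                      + (∫ v in (0:ℝ)..y, (ρ * π v + (1 - ρ))))))
            * (∫ v in (0:ℝ)..y, (ρ * π v + (1 - ρ))) := by
      have hstep : (∫ u in (0:ℝ)..y, (ρ * π u + (1 - ρ)) * (π y * fα x u + π x * fα y u))
          = ∫ u in (0:ℝ)..y,
            ((π y * (c * π x / (1 - ρ)) + π x * (c * π y / (1 - ρ)))
              * ((ρ * π u + (1 - ρ))
                  * ((∫ v in x..(1:ℝ), (ρ * π v + (1 - ρ)))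
                     + ∫ v in (0:ℝ)..u, (ρ * π v + (1 - ρ))))
            + (π x * (c * π y / (1 - ρ))
                * (1 - ((∫ v in x..(1:ℝ), (ρ * π v + (1 - ρ)))
                        + (∫ v in (0:ℝ)..y, (ρ * π v + (1 - ρ))))))
              * (ρ * π u + (1 - ρ))) := by
        apply intervalIntegral.integral_congr_ae
        filter_upwards [hae] with u hu hmem
        rw [Set.uIoc_of_le hy.1] at hmem
        have huy : u < y := lt_of_le_of_ne hmem.2 hu
        have hux : u < x := lt_trans huy hxy
        rw [hfα x u, hfα y u, cint_of_gt hux, cint_of_gt huy]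
        have e1 : (∫ v in (0:ℝ)..y, (ρ * π v + (1 - ρ)))
            + (∫ v in y..(1:ℝ), (ρ * π v + (1 - ρ))) = 1 := by
          rw [hadj 0 y 1 h01 hy h11]; exact hT
        have e2 : (∫ v in y..(1:ℝ), (ρ * π v + (1 - ρ)))
            = 1 - (∫ v in (0:ℝ)..y, (ρ * π v + (1 - ρ))) := by linarith
        rw [e2]; ring
      rw [hstep]
      exact piece_lemma (fun u => ρ * π u + (1 - ρ)) _ _
        (∫ v in x..(1:ℝ), (ρ * π v + (1 - ρ))) hgmeas hy.1 hC2
    rw [hfα x y,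
      cint_of_gt hxy (fun u => (ρ * π u + (1 - ρ)) * (π y * fα x u + π x * fα y u)),
      cint_of_gt hxy (fun u => ρ * π u + (1 - ρ)), hkey1, hkey2]
    field_simp
    ring
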